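/- Fix k ≥ 1, a weight λ, an index i* ∈ {1,…,m}, an injective tuple j₀ : {1,…,k} → {1,…,n}, and a permutation η of {1,…,k}. Let S be the finite set of all tuples L : {1,…,k} → {1,…,n} that are rearrangements of j₀ (i.e. L = j₀ ∘ σ for some permutation σ of {1,…,k}). Define the integer matrix A with rows and columns indexed by S by: A(L, L) = ω_{i*, L(η(k))}(λ); for each t ∈ {1,…,k−1}, A(L ∘ (η(t) η(k)), L) = 1 − δ[η(k) > η(t)] − δ[L(η(k)) < L(η(t))], where δ[P] is 1 if P holds and 0 otherwise; and A(M, L) = 0 for all other M ∈ S. Then (a) A(M, L) = 0 whenever L < M in the reverse Semitic lexicographic order, so A is triangular with respect to this order, and (b) det A = ∏_{L ∈ S} ω_{i*, L(η(k))}(λ) = (∏_{t=1}^k ω_{i*, j₀(t)}(λ))^{(k−1)!}. -/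

import Mathlib

set_option maxHeartbeats 1000000


/-- The reverse Semitic lexicographic order on tuples valued in a linear order:
`K < L` iff `K ≠ L` and, at the largest position `p` where they differ,
one has `K p > L p`. -/
def RevSemLt {k : ℕ} {α : Type*} [LinearOrder α] (K L : Fin k → α) : Prop :=
  K ≠ L ∧ ∀ p : Fin k, (K p ≠ L p ∧ ∀ q : Fin k, p < q → K q = L q) → L p < K p

/-- `ω_{ij}(λ) = λ⁺(i) + λ⁻(j) + m + 1 - i - j`, with 1-based indices encoded by `Fin`. -/
def omegaWt (m n : ℕ) (lam : (Fin m → ℤ) × (Fin n → ℤ)) (i : Fin m) (j : Fin n) : ℤ :=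
  lam.1 i + lam.2 j + m + 1 - ((i : ℤ) + 1) - ((j : ℤ) + 1)

/-- Fix `k ≥ 1`, a weight `λ`, an index `i*`, an injective tuple `j₀`, and a permutation
`η` of `{1,…,k}`.  Let `S` be the set of rearrangements of `j₀`, and let `A` be the
integer matrix indexed by `S` with `A(L,L) = ω_{i*,L(η(k))}(λ)`,
`A(L ∘ (η(t) η(k)), L) = 1 − δ[η(k) > η(t)] − δ[L(η(k)) < L(η(t))]` for positions
`t ∈ {1,…,k−1}`, and all other entries zero.  Then (a) `A(M,L) = 0` whenever `L < M` in
the reverse Semitic lexicographic order, and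
(b) `det A = ∏_{L∈S} ω_{i*,L(η(k))}(λ) = (∏_{t=1}^k ω_{i*,j₀(t)}(λ))^{(k−1)!}`. -/
theorem psi_matrix_triangular_det (k m n : ℕ) (hk : 1 ≤ k)
    (lam : (Fin m → ℤ) × (Fin n → ℤ)) (istar : Fin m)
    (j0 : Fin k → Fin n) (hj0 : Function.Injective j0)
    (η : Equiv.Perm (Fin k))
    (A : Matrix {L : Fin k → Fin n // ∃ σ : Equiv.Perm (Fin k), L = j0 ∘ σ}
                {L : Fin k → Fin n // ∃ σ : Equiv.Perm (Fin k), L = j0 ∘ σ} ℤ)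
    (hdiag : ∀ L, A L L = omegaWt m n lam istar (L.1 (η ⟨k - 1, by omega⟩)))
    (hswap : ∀ L M, ∀ t : Fin k, (t : ℕ) < k - 1 →
        M.1 = L.1 ∘ Equiv.swap (η t) (η ⟨k - 1, by omega⟩) →
        A M L = 1 - (if η t < η ⟨k - 1, by omega⟩ then 1 else 0)
          - (if L.1 (η ⟨k - 1, by omega⟩) < L.1 (η t) then 1 else 0))
    (hzero : ∀ L M, M ≠ L →
        (∀ t : Fin k, (t : ℕ) < k - 1 →
          M.1 ≠ L.1 ∘ Equiv.swap (η t) (η ⟨k - 1, by omega⟩)) →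
        A M L = 0) :
    (∀ L M, RevSemLt L.1 M.1 → A M L = 0) ∧
    A.det = (∏ L : {L : Fin k → Fin n // ∃ σ : Equiv.Perm (Fin k), L = j0 ∘ σ},
        omegaWt m n lam istar (L.1 (η ⟨k - 1, by omega⟩))) ∧
    A.det = (∏ t : Fin k, omegaWt m n lam istar (j0 t)) ^ Nat.factorial (k - 1) := by
  classical
  obtain ⟨k', rfl⟩ : ∃ k', k = k' + 1 := ⟨k - 1, by omega⟩
  have hLinj : ∀ L : {L : Fin (k'+1) → Fin n // ∃ σ : Equiv.Perm (Fin (k'+1)), L = j0 ∘ σ},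
      Function.Injective L.1 := by
    rintro ⟨L, σ, rfl⟩
    exact hj0.comp σ.injective
  -- Part (a)
  have parta : ∀ L M : {L : Fin (k'+1) → Fin n // ∃ σ : Equiv.Perm (Fin (k'+1)), L = j0 ∘ σ},
      RevSemLt L.1 M.1 → A M L = 0 := by
    intro L M hLM
    by_cases hsw : ∃ t : Fin (k'+1), (t : ℕ) < k' + 1 - 1 ∧
        M.1 = L.1 ∘ Equiv.swap (η t) (η ⟨k' + 1 - 1, by omega⟩)
    · obtain ⟨t, ht, hM⟩ := hsw
      have hac : η t ≠ η ⟨k' + 1 - 1, by omega⟩ := by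
        intro h
        have h2 := η.injective h
        rw [Fin.ext_iff] at h2
        simp at h2
        omega
      have hinj := hLinj L
      have hMc := congrFun hM (η ⟨k' + 1 - 1, by omega⟩)
      have hMa := congrFun hM (η t)
      simp only [Function.comp_apply, Equiv.swap_apply_left, Equiv.swap_apply_right]
        at hMc hMa
      have hMother : ∀ q, q ≠ η t → q ≠ η ⟨k' + 1 - 1, by omega⟩ → M.1 q = L.1 q := by
        intro q h1 h2
        have h3 := congrFun hM q
        simp only [Function.comp_apply, Equiv.swap_apply_of_ne_of_ne h1 h2] at h3
        exact h3
      rw [hswap L M t ht hM]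
      rcases lt_or_gt_of_ne hac with hlt | hgt
      · have key : M.1 (η ⟨k' + 1 - 1, by omega⟩) < L.1 (η ⟨k' + 1 - 1, by omega⟩) := by
          refine hLM.2 _ ⟨?_, ?_⟩
          · rw [hMc]
            exact fun h => hac.symm (hinj h)
          · intro q hq
            refine (hMother q ?_ (ne_of_gt hq)).symm
            rintro rfl
            exact absurd hq (asymm hlt)
        rw [hMc] at key
        rw [if_pos hlt, if_neg (asymm key)]
        norm_num
      · have key : M.1 (η t) < L.1 (η t) := by
          refine hLM.2 _ ⟨?_, ?_⟩
          · rw [hMa]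
            exact fun h => hac (hinj h)
          · intro q hq
            refine (hMother q (ne_of_gt hq) ?_).symm
            rintro rfl
            exact absurd hq (asymm hgt)
        rw [hMa] at key
        rw [if_neg (asymm hgt), if_pos key]
        norm_num
    · refine hzero L M (fun h => hLM.1 (congrArg Subtype.val h).symm) ?_
      intro t ht h
      exact hsw ⟨t, ht, h⟩
  -- A linear order realizing the reverse Semitic lexicographic order
  haveI hwf : WellFoundedLT (Fin (k'+1)) := inferInstance
  letI lexLO : LinearOrder (Lex (Fin (k'+1) → (Fin n)ᵒᵈ)) :=
    @Pi.Lex.linearOrder (Fin (k'+1)) _ inferInstance hwf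
      (fun _ => inferInstance)
  letI myLO : LinearOrder {L : Fin (k'+1) → Fin n // ∃ σ : Equiv.Perm (Fin (k'+1)), L = j0 ∘ σ} :=
    LinearOrder.lift'
      (fun L => (toLex (fun q : Fin (k'+1) => OrderDual.toDual (L.1 q.rev)) :
        Lex (Fin (k'+1) → (Fin n)ᵒᵈ)))
      (by
        intro L M h
        rw [toLex_inj] at h
        apply Subtype.ext
        funext p
        have h2 := congrFun h p.rev
        simpa [Fin.rev_rev] using h2)
  have hdet : A.det = ∏ L : {L : Fin (k'+1) → Fin n // ∃ σ : Equiv.Perm (Fin (k'+1)), L = j0 ∘ σ},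
      omegaWt m n lam istar (L.1 (η ⟨k' + 1 - 1, by omega⟩)) := by
    have hdet0 : A.det = ∏ L, A L L := by
      refine Matrix.det_of_upperTriangular ?_
      intro M L h
      have h' : Pi.Lex (· < ·) (fun {_} => (· < ·))
          (fun q : Fin (k'+1) => OrderDual.toDual (L.1 q.rev))
          (fun q : Fin (k'+1) => OrderDual.toDual (M.1 q.rev)) := h
      obtain ⟨q, hq1, hq2⟩ := h'
      have hq2' : M.1 q.rev < L.1 q.rev := hq2
      apply parta L M
      refine ⟨?_, ?_⟩
      · intro hLM
        rw [hLM] at hq2'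
        exact lt_irrefl _ hq2'
      · rintro p ⟨hne, hgt⟩
        rcases lt_trichotomy p q.rev with hc | hc | hc
        · exact absurd (hgt q.rev hc) (ne_of_gt hq2')
        · rw [hc]; exact hq2'
        · have hpq : p.rev < q := by
            rw [← Fin.rev_rev q]
            exact Fin.rev_lt_rev.mpr hc
          have h3 := hq1 p.rev hpq
          have h4 : L.1 p = M.1 p := by simpa [Fin.rev_rev] using h3
          exact absurd h4 hne
    rw [hdet0]
    exact Finset.prod_congr rfl fun L _ => hdiag L
  -- the counting identity
  have hS : ∀ G : Fin n → ℤ,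
      (∏ L : {L : Fin (k'+1) → Fin n // ∃ σ : Equiv.Perm (Fin (k'+1)), L = j0 ∘ σ},
        G (L.1 (η ⟨k' + 1 - 1, by omega⟩))) = (∏ t, G (j0 t)) ^ k'.factorial := by
    intro G
    have hbij : Function.Bijective (fun σ : Equiv.Perm (Fin (k'+1)) =>
        (⟨j0 ∘ σ, σ, rfl⟩ :
          {L : Fin (k'+1) → Fin n // ∃ σ : Equiv.Perm (Fin (k'+1)), L = j0 ∘ σ})) := by
      constructor
      · intro σ σ' h
        have h1 : j0 ∘ σ = j0 ∘ σ' := congrArg Subtype.val h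
        exact Equiv.ext fun x => hj0 (congrFun h1 x)
      · rintro ⟨L, σ, rfl⟩
        exact ⟨σ, rfl⟩
    rw [← Fintype.prod_bijective _ hbij
      (fun σ : Equiv.Perm (Fin (k'+1)) => G (j0 (σ (η ⟨k' + 1 - 1, by omega⟩)))) _
      (fun σ => rfl)]
    have h1 : (∏ σ : Equiv.Perm (Fin (k'+1)), G (j0 (σ (η ⟨k' + 1 - 1, by omega⟩)))) =
        ∏ σ : Equiv.Perm (Fin (k'+1)), G (j0 (σ 0)) := by
      refine (Fintype.prod_equiv
        (Equiv.mulRight (Equiv.swap (η ⟨k' + 1 - 1, by omega⟩) 0)) _ _ fun σ => ?_).symm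
      simp [Equiv.Perm.mul_apply]
    rw [h1]
    have h2 : (∏ σ : Equiv.Perm (Fin (k'+1)), G (j0 (σ 0))) =
        ∏ pe : Fin (k'+1) × Equiv.Perm (Fin k'), G (j0 pe.1) := by
      refine (Fintype.prod_equiv Equiv.Perm.decomposeFin.symm _ _ fun pe => ?_).symm
      obtain ⟨p, e⟩ := pe
      simp [Equiv.Perm.decomposeFin_symm_apply_zero]
    rw [h2, Fintype.prod_prod_type]
    simp [Finset.prod_const, Finset.card_univ, Fintype.card_perm, Fintype.card_fin,
      Finset.prod_pow]
  refine ⟨parta, hdet, ?_⟩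
  rw [hdet, hS (fun v => omegaWt m n lam istar v)]
  norm_num
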